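/- Let X be a random vector in ℝ^d with finite second moment and positive definite covariance matrix Σ(X), let T be a symmetric positive definite d×d matrix, b ∈ ℝ^d, and set Y = T X + b. Then the affine transport map from X to Y, T_aff(x) = Ax + c with A = Σ(Y)^{1/2}(Σ(Y)^{1/2} Σ(X) Σ(Y)^{1/2})^{−1/2} Σ(Y)^{1/2} and c = E[Y] − A E[X], satisfies A = T and c = b; in particular the pushforward of the law of X under T_aff equals the law of Y, so W₂(T_aff(X), Y) = 0. -/

import Mathlib

open MeasureTheory ProbabilityTheory Matrix
open scoped ENNReal NNReal

noncomputable section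

abbrev Ed (d : ℕ) := EuclideanSpace ℝ (Fin d)

/-- A coupling of `μ` and `ν`: a measure on the product whose marginals are `μ` and `ν`. -/
def IsCoupling {d : ℕ} (γ : Measure (Ed d × Ed d)) (μ ν : Measure (Ed d)) : Prop :=
  γ.map Prod.fst = μ ∧ γ.map Prod.snd = ν

/-- Quadratic transport cost of a coupling. -/
def cost2 {d : ℕ} (γ : Measure (Ed d × Ed d)) : ℝ≥0∞ :=
  ∫⁻ p, ENNReal.ofReal (‖p.1 - p.2‖ ^ 2) ∂γ

/-- Squared 2-Wasserstein distance. -/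
def W2sq {d : ℕ} (μ ν : Measure (Ed d)) : ℝ≥0∞ :=
  ⨅ (γ : Measure (Ed d × Ed d)) (_ : IsCoupling γ μ ν), cost2 γ

/-- 2-Wasserstein distance. -/
def W2 {d : ℕ} (μ ν : Measure (Ed d)) : ℝ :=
  Real.sqrt (W2sq μ ν).toReal

/-- Finite second moment. -/
def FiniteSecondMoment {d : ℕ} (μ : Measure (Ed d)) : Prop :=
  ∫⁻ x, ENNReal.ofReal (‖x‖ ^ 2) ∂μ < ⊤

/-- Mean vector of a measure. -/
def meanVec {d : ℕ} (μ : Measure (Ed d)) : Ed d := ∫ x, x ∂μ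

/-- Covariance matrix of a measure. -/
def covMatrix {d : ℕ} (μ : Measure (Ed d)) : Matrix (Fin d) (Fin d) ℝ :=
  Matrix.of fun i j => ∫ x, (x i - meanVec μ i) * (x j - meanVec μ j) ∂μ

/-- Positive semidefinite square root of a matrix (junk value `0` if not psd). -/
def msqrt {d : ℕ} (S : Matrix (Fin d) (Fin d) ℝ) : Matrix (Fin d) (Fin d) ℝ :=
  @dite _ S.PosSemidef (Classical.dec _) (fun h => (h.1.eigenvectorUnitary : Matrix (Fin d) (Fin d) ℝ) *
    diagonal (Real.sqrt ∘ h.1.eigenvalues) * (star h.1.eigenvectorUnitary : Matrix (Fin d) (Fin d) ℝ)) (fun _ => 0)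

/-- Standard Gaussian measure on `ℝ^d`. -/
def stdGaussian (d : ℕ) : Measure (Ed d) :=
  (Measure.pi fun _ : Fin d => gaussianReal 0 1).map (EuclideanSpace.equiv (Fin d) ℝ).symm

/-- Gaussian measure on `ℝ^d` with mean `m` and covariance `S`. -/
def gaussianE {d : ℕ} (m : Ed d) (S : Matrix (Fin d) (Fin d) ℝ) : Measure (Ed d) :=
  (stdGaussian d).map fun x => m + (msqrt S).toEuclideanLin x

/-- Normal approximation: Gaussian with the same mean and covariance as `μ`. -/
def normalApprox {d : ℕ} (μ : Measure (Ed d)) : Measure (Ed d) :=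
  gaussianE (meanVec μ) (covMatrix μ)


section Aux
variable {d : ℕ}
open scoped MatrixOrder

lemma msqrt_eq {S : Matrix (Fin d) (Fin d) ℝ} (h : S.PosSemidef) : msqrt S = CFC.sqrt S := by
  rw [msqrt, dif_pos h, CFC.sqrt_eq_cfc, cfc_nnreal_eq_real _ S, h.1.cfc_eq]
  simp only [IsHermitian.cfc, Unitary.conjStarAlgAut_apply, RCLike.ofReal_real_eq_id, id_eq, Function.comp_def]
  unfold Real.sqrt
  rfl

lemma msqrt_psd {S : Matrix (Fin d) (Fin d) ℝ} (h : S.PosSemidef) : (msqrt S).PosSemidef := by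
  rw [msqrt_eq h]; exact (CFC.sqrt_nonneg S).posSemidef

lemma msqrt_mul_self {S : Matrix (Fin d) (Fin d) ℝ} (h : S.PosSemidef) :
    msqrt S * msqrt S = S := by rw [msqrt_eq h]; exact CFC.sqrt_mul_sqrt_self S h.nonneg

/-- conjugation of a PD matrix by an invertible matrix is PD -/
lemma posDef_conj {A B : Matrix (Fin d) (Fin d) ℝ} (hA : A.PosDef) (hB : IsUnit B) :
    (Bᴴ * A * B).PosDef := by
  exact hA.conjTranspose_mul_mul_same (mulVec_injective_of_isUnit hB)

lemma isUnit_msqrt {S : Matrix (Fin d) (Fin d) ℝ} (h : S.PosDef) : IsUnit (msqrt S) := by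
  rw [isUnit_iff_isUnit_det]
  have hdet : det (msqrt S) * det (msqrt S) = det S := by
    rw [← det_mul, msqrt_mul_self h.posSemidef]
  have := h.det_pos
  refine isUnit_iff_ne_zero.mpr fun h0 => ?_
  rw [h0, mul_zero] at hdet
  exact this.ne (hdet ▸ rfl)

lemma msqrt_posDef {S : Matrix (Fin d) (Fin d) ℝ} (h : S.PosDef) : (msqrt S).PosDef := by
  have hpsd := msqrt_psd h.posSemidef
  have hu := isUnit_msqrt h
  exact hpsd.posDef_iff_isUnit.mpr hu

/-- Main algebraic lemma. -/
lemma key_alg {Sg T A C : Matrix (Fin d) (Fin d) ℝ} (hSg : Sg.PosDef) (hT : T.PosDef)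
    (hC : C = T * Sg * T)
    (hA : A = msqrt C * (msqrt (msqrt C * Sg * msqrt C))⁻¹ * msqrt C) : A = T := by
  have hTh : Tᴴ = T := hT.1
  have hCpd : C.PosDef := by
    have h := posDef_conj hSg hT.isUnit
    rw [hTh] at h
    rwa [hC]
  set S := msqrt C with hSdef
  have hSh : Sᴴ = S := (msqrt_psd hCpd.posSemidef).1
  have hSS : S * S = C := msqrt_mul_self hCpd.posSemidef
  have hSu : IsUnit S := isUnit_msqrt hCpd
  have hMpd : (S * Sg * S).PosDef := by
    have h := posDef_conj hSg hSu
    rwa [hSh] at h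
  set R := msqrt (S * Sg * S) with hRdef
  have hRR : R * R = S * Sg * S := msqrt_mul_self hMpd.posSemidef
  have hRpd : R.PosDef := msqrt_posDef hMpd
  have hRu : IsUnit R := hRpd.isUnit
  have hRiR : R⁻¹ * R = 1 := nonsing_inv_mul R (isUnit_iff_isUnit_det _ |>.mp hRu)
  have hRRi : R * R⁻¹ = 1 := mul_nonsing_inv R (isUnit_iff_isUnit_det _ |>.mp hRu)
  -- A is PosDef
  have hApd : A.PosDef := by
    have h := posDef_conj hRpd.inv hSu
    rw [hSh] at h
    rwa [hA]
  -- A * Sg * A = C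
  have hASgA : A * Sg * A = C := by
    rw [hA]
    calc S * R⁻¹ * S * Sg * (S * R⁻¹ * S)
        = S * R⁻¹ * (S * Sg * S) * R⁻¹ * S := by noncomm_ring
      _ = S * (R⁻¹ * (R * R) * R⁻¹) * S := by rw [← hRR]; noncomm_ring
      _ = S * S := by rw [← Matrix.mul_assoc R⁻¹ R R, hRiR, Matrix.one_mul, hRRi, Matrix.mul_one]
      _ = C := hSS
  -- uniqueness
  set W := msqrt Sg with hWdef
  have hWh : Wᴴ = W := (msqrt_psd hSg.posSemidef).1
  have hWW : W * W = Sg := msqrt_mul_self hSg.posSemidef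
  have hWu : IsUnit W := isUnit_msqrt hSg
  have hWd : IsUnit W.det := isUnit_iff_isUnit_det _ |>.mp hWu
  have hU : (W * A * W).PosSemidef := by
    have h := hApd.posSemidef.conjTranspose_mul_mul_same W
    rwa [hWh] at h
  have hV : (W * T * W).PosSemidef := by
    have h := hT.posSemidef.conjTranspose_mul_mul_same W
    rwa [hWh] at h
  have hsq : (W * A * W) ^ 2 = (W * T * W) ^ 2 := by
    have h1 : (W * A * W) ^ 2 = W * (A * Sg * A) * W := by
      rw [pow_two, ← hWW]; noncomm_ring
    have h2 : (W * T * W) ^ 2 = W * (T * Sg * T) * W := by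
      rw [pow_two, ← hWW]; noncomm_ring
    rw [h1, h2, hASgA, hC]
  have hUV : W * A * W = W * T * W := (CFC.sq_eq_sq_iff _ _ hU.nonneg hV.nonneg).mp hsq
  have hcalc : ∀ X : Matrix (Fin d) (Fin d) ℝ, W⁻¹ * (W * X * W) * W⁻¹ = X := fun X => by
    rw [Matrix.mul_assoc W X W, Matrix.nonsing_inv_mul_cancel_left _ _ hWd,
      Matrix.mul_nonsing_inv_cancel_right _ _ hWd]
  rw [← hcalc A, hUV, hcalc T]


lemma memL2 {μ : Measure (Ed d)} [IsProbabilityMeasure μ] (hμ : FiniteSecondMoment μ) :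
    MemLp (fun x : Ed d => x) 2 μ := by
  have : (fun x : Ed d => x) = (id : Ed d → Ed d) := rfl
  rw [this, memLp_two_iff_integrable_sq_norm aestronglyMeasurable_id]
  refine ⟨(continuous_norm.pow 2).aestronglyMeasurable, ?_⟩
  rw [HasFiniteIntegral]
  calc ∫⁻ x, ‖‖x‖ ^ 2‖ₑ ∂μ = ∫⁻ x, ENNReal.ofReal (‖x‖ ^ 2) ∂μ := by
        refine lintegral_congr fun x => ?_
        rw [← Real.enorm_eq_ofReal (by positivity)]
    _ < ⊤ := hμ

lemma integrable_id' {μ : Measure (Ed d)} [IsProbabilityMeasure μ] (hμ : FiniteSecondMoment μ) :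
    Integrable (fun x : Ed d => x) μ :=
  (memL2 hμ).integrable (by norm_num)

lemma abs_coord_le_norm (x : Ed d) (i : Fin d) : |x i| ≤ ‖x‖ := by
  rw [EuclideanSpace.norm_eq]
  rw [show |x i| = Real.sqrt (|x i| ^ 2) by rw [Real.sqrt_sq_eq_abs, abs_abs]]
  apply Real.sqrt_le_sqrt
  rw [show |x i| ^ 2 = ‖x i‖ ^ 2 by rw [Real.norm_eq_abs]]
  exact Finset.single_le_sum (f := fun j => ‖x j‖ ^ 2) (fun j _ => by positivity)
    (Finset.mem_univ i)

lemma memL2_coord {μ : Measure (Ed d)} [IsProbabilityMeasure μ] (hμ : FiniteSecondMoment μ)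
    (i : Fin d) : MemLp (fun x : Ed d => x i) 2 μ := by
  refine (memL2 hμ).of_le ((EuclideanSpace.proj i : Ed d →L[ℝ] ℝ).continuous.aestronglyMeasurable) ?_
  refine Filter.Eventually.of_forall fun x => ?_
  simpa [Real.norm_eq_abs] using abs_coord_le_norm x i

lemma memL2_coord_centered {μ : Measure (Ed d)} [IsProbabilityMeasure μ]
    (hμ : FiniteSecondMoment μ) (m : Ed d) (i : Fin d) :
    MemLp (fun x : Ed d => x i - m i) 2 μ :=
  (memL2_coord hμ i).sub (memLp_const (m i))

lemma integrable_coord_prod {μ : Measure (Ed d)} [IsProbabilityMeasure μ]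
    (hμ : FiniteSecondMoment μ) (m : Ed d) (i j : Fin d) :
    Integrable (fun x : Ed d => (x i - m i) * (x j - m j)) μ := by
  have h := (memL2_coord_centered hμ m j).smul (memL2_coord_centered hμ m i)
    (r := 1)
  rw [memLp_one_iff_integrable] at h
  exact h
lemma coord_toEuclideanLin (T : Matrix (Fin d) (Fin d) ℝ) (x : Ed d) (i : Fin d) :
    (T.toEuclideanLin x) i = ∑ k, T i k * x k := rfl

lemma meanVec_map {μ : Measure (Ed d)} [IsProbabilityMeasure μ] (hμ : FiniteSecondMoment μ)
    (T : Matrix (Fin d) (Fin d) ℝ) (b : Ed d) :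
    meanVec (μ.map fun x => T.toEuclideanLin x + b) = T.toEuclideanLin (meanVec μ) + b := by
  set L : Ed d →L[ℝ] Ed d := LinearMap.toContinuousLinearMap (T.toEuclideanLin) with hL
  have hLe : ∀ x, T.toEuclideanLin x = L x := fun x => rfl
  have hcont : Continuous fun x : Ed d => T.toEuclideanLin x + b := by
    simp only [hLe]
    exact L.continuous.add continuous_const
  rw [meanVec, integral_map (f := fun y : Ed d => y) hcont.aemeasurable
    aestronglyMeasurable_id]
  simp only [id, hLe]
  rw [integral_add (L.integrable_comp (integrable_id' hμ)) (integrable_const b),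
    integral_const, probReal_univ, one_smul,
    L.integral_comp_comm (integrable_id' hμ)]
  rfl

lemma covMatrix_map {μ : Measure (Ed d)} [IsProbabilityMeasure μ] (hμ : FiniteSecondMoment μ)
    (T : Matrix (Fin d) (Fin d) ℝ) (b : Ed d) :
    covMatrix (μ.map fun x => T.toEuclideanLin x + b) = T * covMatrix μ * Tᵀ := by
  set m := meanVec μ with hm
  set f : Ed d → Ed d := fun x => T.toEuclideanLin x + b with hf
  set L : Ed d →L[ℝ] Ed d := LinearMap.toContinuousLinearMap (T.toEuclideanLin) with hL
  have hLe : ∀ x, T.toEuclideanLin x = L x := fun x => rfl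
  have hcont : Continuous f := by
    simp only [hf, hLe]
    exact L.continuous.add continuous_const
  have hmν : meanVec (μ.map f) = T.toEuclideanLin m + b := meanVec_map hμ T b
  have key : ∀ (x : Ed d) (i : Fin d), f x i - meanVec (μ.map f) i
      = ∑ k, T i k * (x k - m k) := by
    intro x i
    rw [hmν, hf]
    show T.toEuclideanLin x i + b i - (T.toEuclideanLin m i + b i) = _
    rw [coord_toEuclideanLin, coord_toEuclideanLin,
      show (∑ k, T i k * (x k - m k)) = ∑ k, T i k * x k - ∑ k, T i k * m k by
        rw [← Finset.sum_sub_distrib]; exact Finset.sum_congr rfl fun k _ => by ring]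
    ring
  ext i j
  show (∫ y, (y i - meanVec (μ.map f) i) * (y j - meanVec (μ.map f) j) ∂(μ.map f)) = _
  rw [integral_map hcont.aemeasurable]
  swap
  · apply Continuous.aestronglyMeasurable
    exact (((EuclideanSpace.proj i : Ed d →L[ℝ] ℝ).continuous.sub continuous_const).mul
      (((EuclideanSpace.proj j : Ed d →L[ℝ] ℝ).continuous.sub continuous_const)))
  have step1 : (∫ x, (f x i - meanVec (μ.map f) i) * (f x j - meanVec (μ.map f) j) ∂μ)
      = ∫ x, ∑ k, ∑ l, (T i k * T j l) * ((x k - m k) * (x l - m l)) ∂μ := by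
    congr 1; funext x
    rw [key x i, key x j, Finset.sum_mul_sum]
    refine Finset.sum_congr rfl fun k _ => Finset.sum_congr rfl fun l _ => by ring
  rw [step1, integral_finset_sum]
  swap
  · exact fun k _ => integrable_finset_sum _ fun l _ =>
      ((integrable_coord_prod hμ m k l).const_mul _)
  have step2 : ∀ k, (∫ x, ∑ l, (T i k * T j l) * ((x k - m k) * (x l - m l)) ∂μ)
      = ∑ l, (T i k * T j l) * covMatrix μ k l := by
    intro k
    rw [integral_finset_sum _ fun l _ => ((integrable_coord_prod hμ m k l).const_mul _)]
    exact Finset.sum_congr rfl fun l _ => by rw [integral_const_mul]; rfl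
  rw [Finset.sum_congr rfl fun k _ => step2 k]
  rw [Matrix.mul_apply]
  rw [Finset.sum_comm]
  refine Finset.sum_congr rfl fun l _ => ?_
  rw [Matrix.mul_apply, Finset.sum_mul]
  exact Finset.sum_congr rfl fun k _ => by rw [Matrix.transpose_apply]; ring


lemma W2_self (ν : Measure (Ed d)) : W2 ν ν = 0 := by
  set γ : Measure (Ed d × Ed d) := ν.map (fun x => (x, x)) with hγ
  have hdiag : Measurable fun x : Ed d => (x, x) := measurable_id.prodMk measurable_id
  have hcoup : IsCoupling γ ν ν := by
    constructor
    · rw [hγ, Measure.map_map measurable_fst hdiag]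
      exact congrArg ν.map rfl |>.trans (Measure.map_id)
    · rw [hγ, Measure.map_map measurable_snd hdiag]
      exact congrArg ν.map rfl |>.trans (Measure.map_id)
  have hcost : cost2 γ = 0 := by
    rw [cost2, hγ, lintegral_map (f := fun p : Ed d × Ed d => ENNReal.ofReal (‖p.1 - p.2‖ ^ 2)) ((measurable_fst.sub measurable_snd).norm.pow measurable_const).ennreal_ofReal hdiag]
    simp
  have hW2sq : W2sq ν ν = 0 := by
    refine le_antisymm ?_ zero_le
    calc W2sq ν ν ≤ cost2 γ := iInf₂_le γ hcoup
      _ = 0 := hcost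
  rw [W2, hW2sq]
  simp
end Aux

/-- If `Y = T X + b` for a symmetric positive definite `T`, then the affine transport map
from `X` to `Y` recovers `T` and `b` exactly; in particular it pushes the law of `X` to the
law of `Y` and `W₂(T_aff X, Y) = 0`. -/
theorem affine_transport_recovers_affine_map {d : ℕ} (μ : Measure (Ed d))
    [IsProbabilityMeasure μ]
    (hμ : FiniteSecondMoment μ) (hX : (covMatrix μ).PosDef)
    (T : Matrix (Fin d) (Fin d) ℝ) (hT : T.PosDef) (b : Ed d)
    (ν : Measure (Ed d)) (hν : ν = μ.map fun x => T.toEuclideanLin x + b)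
    (A : Matrix (Fin d) (Fin d) ℝ)
    (hA : A = msqrt (covMatrix ν) *
      (msqrt (msqrt (covMatrix ν) * covMatrix μ * msqrt (covMatrix ν)))⁻¹ *
      msqrt (covMatrix ν))
    (c : Ed d) (hc : c = meanVec ν - A.toEuclideanLin (meanVec μ)) :
    A = T ∧ c = b ∧ (μ.map fun x => A.toEuclideanLin x + c) = ν ∧
      W2 (μ.map fun x => A.toEuclideanLin x + c) ν = 0 := by
  have hTt : Tᵀ = T := by
    rw [← Matrix.conjTranspose_eq_transpose_of_trivial]; exact hT.1
  have hCov : covMatrix ν = T * covMatrix μ * T := by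
    rw [hν, covMatrix_map hμ T b, hTt]
  have hAT : A = T := key_alg hX hT hCov hA
  have hmean : meanVec ν = T.toEuclideanLin (meanVec μ) + b := by
    rw [hν]; exact meanVec_map hμ T b
  have hcb : c = b := by rw [hc, hAT, hmean]; abel
  have hmap : (μ.map fun x => A.toEuclideanLin x + c) = ν := by rw [hAT, hcb, hν]
  exact ⟨hAT, hcb, hmap, by rw [hmap]; exact W2_self ν⟩
end
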